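/- Let T be a measure-preserving transformation on a probability space (Ω, Σ, μ) with a countable collection of measurable sets {C_s}. Fix k ≥ 1 and a point x ∈ Ω such that for every s, lim_{N→∞} (1/N)·#{0 ≤ n < N : Tⁿx ∈ C_s} = μ(C_s). Then for every s, limsup_{N→∞} (1/N)·#{0 ≤ n < N : (T^k)ⁿx ∈ C_s} ≤ k·μ(C_s). -/

import Mathlib

open MeasureTheory Filter

/-- Orbit frequency: proportion of times `0 ≤ n < N` with `T^[n] x ∈ S`. -/
noncomputable def orbitFreq {Ω : Type*} (T : Ω → Ω) (x : Ω) (S : Set Ω) (N : ℕ) : ℝ :=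
  (Nat.card {n : ℕ | n < N ∧ T^[n] x ∈ S} : ℝ) / N

lemma orbitFreq_nonneg {Ω : Type*} (T : Ω → Ω) (x : Ω) (S : Set Ω) (N : ℕ) :
    0 ≤ orbitFreq T x S N := by
  unfold orbitFreq
  positivity

/-- If the orbit frequencies of `x` under `T` in each set `C s` converge to `μ (C s)`,
then the orbit frequencies of `x` under the `k`-th iterate `T^k` have limsup
at most `k * μ (C s)`. -/
theorem limsup_freq_iterate_le {Ω : Type*} [MeasurableSpace Ω] (μ : Measure Ω)
    [IsProbabilityMeasure μ] (T : Ω → Ω) (hT : MeasurePreserving T μ μ)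
    {ι : Type*} [Countable ι] (C : ι → Set Ω) (hCmeas : ∀ s, MeasurableSet (C s))
    (k : ℕ) (hk : 1 ≤ k) (x : Ω)
    (hnorm : ∀ s, Filter.Tendsto (fun N => orbitFreq T x (C s) N) Filter.atTop
        (nhds ((μ (C s)).toReal))) :
    ∀ s, Filter.limsup (fun N => orbitFreq (T^[k]) x (C s) N) Filter.atTop
      ≤ k * (μ (C s)).toReal := by
  intro s
  have hk0 : 0 < k := hk
  have key : ∀ N : ℕ, orbitFreq (T^[k]) x (C s) N ≤ k * orbitFreq T x (C s) (k * N) := by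
    intro N
    have hfin : ({m : ℕ | m < k * N ∧ T^[m] x ∈ C s}).Finite :=
      (Set.finite_Iio (k * N)).subset fun m hm => hm.1
    haveI := hfin.to_subtype
    have hcard : Nat.card {n : ℕ | n < N ∧ (T^[k])^[n] x ∈ C s}
        ≤ Nat.card {m : ℕ | m < k * N ∧ T^[m] x ∈ C s} := by
      apply Nat.card_le_card_of_injective
        (fun n => ⟨k * n.1, (Nat.mul_lt_mul_left hk0).mpr n.2.1, by
          rw [Function.iterate_mul]; exact n.2.2⟩)
      intro a b hab
      have : k * a.1 = k * b.1 := congrArg Subtype.val hab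
      exact Subtype.ext (Nat.eq_of_mul_eq_mul_left hk0 this)
    unfold orbitFreq
    have hkR : (0:ℝ) < k := by exact_mod_cast hk0
    rcases Nat.eq_zero_or_pos N with h0 | hN
    · simp [h0]
    have hNR : (0:ℝ) < N := by exact_mod_cast hN
    have hcardR : (Nat.card {n : ℕ | n < N ∧ (T^[k])^[n] x ∈ C s} : ℝ)
        ≤ (Nat.card {m : ℕ | m < k * N ∧ T^[m] x ∈ C s} : ℝ) := by exact_mod_cast hcard
    rw [Nat.cast_mul, show (k:ℝ) * (↑(Nat.card {m : ℕ | m < k * N ∧ T^[m] x ∈ C s}) / ((k:ℝ) * N))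
        = (Nat.card {m : ℕ | m < k * N ∧ T^[m] x ∈ C s} : ℝ) / N by
      field_simp]
    exact div_le_div_of_nonneg_right hcardR hNR.le |>.trans_eq rfl
  have htend : Filter.Tendsto (fun N => (k:ℝ) * orbitFreq T x (C s) (k * N)) Filter.atTop
      (nhds ((k:ℝ) * (μ (C s)).toReal)) := by
    apply Filter.Tendsto.const_mul
    exact (hnorm s).comp (Filter.tendsto_atTop_atTop_of_monotone
      (fun a b hab => Nat.mul_le_mul_left k hab)
      (fun b => ⟨b, Nat.le_mul_of_pos_left b hk0⟩))
  calc Filter.limsup (fun N => orbitFreq (T^[k]) x (C s) N) Filter.atTop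
      ≤ Filter.limsup (fun N => (k:ℝ) * orbitFreq T x (C s) (k * N)) Filter.atTop := by
        exact Filter.limsup_le_limsup (Filter.Eventually.of_forall key)
          (Filter.IsBoundedUnder.isCoboundedUnder_le
            (Filter.isBoundedUnder_of ⟨0, fun N => orbitFreq_nonneg (T^[k]) x (C s) N⟩))
          htend.isBoundedUnder_le
    _ = (k:ℝ) * (μ (C s)).toReal := htend.limsup_eq
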